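/- Let T > 0, Γ > 0, γ > 0, let Z : [0,∞) → ℝ be continuous with Z(t)² ≥ 0, and let V : [0,∞) → ℝ be continuous and nonnegative and, for each k ∈ ℕ, differentiable on (2kT, (2k+1)T) with V'(t) = −4ΓV(t) − 2γZ(t)² there, and differentiable on ((2k+1)T, 2(k+1)T) with V'(t) = 4ΓV(t) − 2γZ(t)² there. Then Z² is integrable on [0,∞) and ∫_0^∞ Z(t)² dt ≤ V(0)/(2γ). -/

import Mathlib

open Set Filter MeasureTheory

/-- Key Grönwall-type bound on a single interval: if `V' = c·V − 2γZ²` on `(a,b)`,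
then `2γ ∫_a^b Z² ≤ e^{max c 0·(b−a)} V a − e^{(max c 0 − c)(b−a)} V b`. -/
lemma bfn_key (γ c a b : ℝ) (hγ : 0 < γ) (hab : a ≤ b)
    (Z V : ℝ → ℝ)
    (hZ : ContinuousOn Z (Icc a b)) (hV : ContinuousOn V (Icc a b))
    (hderiv : ∀ t ∈ Ioo a b, HasDerivAt V (c * V t - 2*γ*(Z t)^2) t) :
    2*γ * ∫ t in a..b, (Z t)^2 ≤
      Real.exp (max c 0 * (b-a)) * V a - Real.exp ((max c 0 - c) * (b-a)) * V b := by
  set m := max c 0 with hm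
  set e : ℝ → ℝ := fun t => Real.exp (-c*(t-a)) with he
  have hecont : Continuous e := by fun_prop
  have hgderiv : ∀ t ∈ Ioo a b,
      HasDerivAt (fun t => e t * V t) (-(2*γ) * (e t * (Z t)^2)) t := by
    intro t ht
    have h0 : HasDerivAt (fun t : ℝ => -c*(t-a)) (-c) t := by
      simpa using (((hasDerivAt_id t).sub_const a).const_mul (-c))
    have h1 := h0.exp
    have := h1.mul (hderiv t ht)
    convert this using 1
    all_goals first | rfl | ring
  have heZcont : ContinuousOn (fun t => e t * (Z t)^2) (Icc a b) :=
    hecont.continuousOn.mul (hZ.pow 2)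
  have hZ2cont : ContinuousOn (fun t => (Z t)^2) (Icc a b) := hZ.pow 2
  have hint : IntervalIntegrable (fun t => -(2*γ) * (e t * (Z t)^2)) volume a b := by
    apply ContinuousOn.intervalIntegrable
    rw [uIcc_of_le hab]
    exact heZcont.const_smul (-(2*γ))
  have hFTC := intervalIntegral.integral_eq_sub_of_hasDerivAt_of_le hab
    (hecont.continuousOn.mul hV) hgderiv hint
  have hea : e a = 1 := by simp [he]
  have hconstmul :
      ∫ t in a..b, -(2*γ) * (e t * (Z t)^2) = -(2*γ) * ∫ t in a..b, e t * (Z t)^2 :=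
    intervalIntegral.integral_const_mul _ _
  have hEq : 2*γ * ∫ t in a..b, e t * (Z t)^2 = V a - e b * V b := by
    rw [hconstmul] at hFTC
    simp only [Pi.mul_apply] at hFTC
    rw [hea] at hFTC
    nlinarith [hFTC]
  -- pointwise bound: Z² ≤ exp(m(b-a)) * (e t * Z²) on [a,b]
  have hpt : ∀ t ∈ Icc a b, (Z t)^2 ≤ Real.exp (m*(b-a)) * (e t * (Z t)^2) := by
    intro t ht
    have hexp : Real.exp (m*(b-a)) * e t = Real.exp (m*(b-a) + -c*(t-a)) := by
      rw [Real.exp_add]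
    have hge : (0:ℝ) ≤ m*(b-a) + -c*(t-a) := by
      rcases le_total c 0 with hc | hc
      · have hm0 : 0 ≤ m := le_max_right _ _
        have := ht.1; have := ht.2
        nlinarith
      · have hmc : m = c := max_eq_left hc
        have := ht.1; have := ht.2
        nlinarith
    have h1 : (1:ℝ) ≤ Real.exp (m*(b-a)) * e t := by
      rw [hexp]; exact Real.one_le_exp hge
    have hz := sq_nonneg (Z t)
    calc (Z t)^2 = 1 * (Z t)^2 := (one_mul _).symm
      _ ≤ (Real.exp (m*(b-a)) * e t) * (Z t)^2 := by
          exact mul_le_mul_of_nonneg_right h1 hz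
      _ = Real.exp (m*(b-a)) * (e t * (Z t)^2) := by ring
  have hintZ2 : IntervalIntegrable (fun t => (Z t)^2) volume a b := by
    apply ContinuousOn.intervalIntegrable; rwa [uIcc_of_le hab]
  have hinteZ : IntervalIntegrable (fun t => Real.exp (m*(b-a)) * (e t * (Z t)^2))
      volume a b := by
    apply ContinuousOn.intervalIntegrable
    rw [uIcc_of_le hab]
    exact heZcont.const_smul (Real.exp (m*(b-a)))
  have hmono := intervalIntegral.integral_mono_on hab hintZ2 hinteZ hpt
  rw [intervalIntegral.integral_const_mul] at hmono
  have hexp2 : Real.exp (m*(b-a)) * e b = Real.exp ((m - c)*(b-a)) := by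
    simp only [he, ← Real.exp_add]
    ring_nf
  have h2 : 2*γ * ∫ t in a..b, (Z t)^2 ≤
      Real.exp (m*(b-a)) * (2*γ * ∫ t in a..b, e t * (Z t)^2) := by
    have hE := Real.exp_pos (m*(b-a))
    nlinarith [hmono]
  rw [hEq] at h2
  calc 2*γ * ∫ t in a..b, (Z t)^2
      ≤ Real.exp (m*(b-a)) * (V a - e b * V b) := h2
    _ = Real.exp (m*(b-a)) * V a - (Real.exp (m*(b-a)) * e b) * V b := by ring
    _ = Real.exp (m*(b-a)) * V a - Real.exp ((m-c)*(b-a)) * V b := by rw [hexp2]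

/-- the measurement error `Z²` is integrable on `[0,∞)` with
`∫₀^∞ Z² ≤ V(0)/(2γ)`. -/
theorem bfn_measurement_error_integrable
    (T Γ γ : ℝ) (hT : 0 < T) (hΓ : 0 < Γ) (hγ : 0 < γ)
    (Z V : ℝ → ℝ)
    (hZ : ContinuousOn Z (Ici 0)) (hZsq : ∀ t : ℝ, 0 ≤ (Z t)^2)
    (hV : ContinuousOn V (Ici 0)) (hVnonneg : ∀ t ∈ Ici (0:ℝ), 0 ≤ V t)
    (hVf : ∀ k : ℕ, ∀ t ∈ Ioo (2*(k:ℝ)*T) ((2*(k:ℝ)+1)*T),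
      HasDerivAt V (-4*Γ*V t - 2*γ*(Z t)^2) t)
    (hVb : ∀ k : ℕ, ∀ t ∈ Ioo ((2*(k:ℝ)+1)*T) (2*((k:ℝ)+1)*T),
      HasDerivAt V (4*Γ*V t - 2*γ*(Z t)^2) t) :
    IntegrableOn (fun t => (Z t)^2) (Ici 0) ∧
    (∫ t in Ici (0:ℝ), (Z t)^2) ≤ V 0 / (2*γ) := by
  -- per-period estimate
  have hIccsub : ∀ a b : ℝ, 0 ≤ a → Icc a b ⊆ Ici 0 := fun a b ha => fun x hx =>
    le_trans ha hx.1
  have hperiod : ∀ k : ℕ,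
      2*γ * ∫ t in (2*(k:ℝ)*T)..(2*((k:ℝ)+1)*T), (Z t)^2
        ≤ V (2*(k:ℝ)*T) - V (2*((k:ℝ)+1)*T) := by
    intro k
    set a : ℝ := 2*(k:ℝ)*T with ha
    set b : ℝ := (2*(k:ℝ)+1)*T with hb
    set d : ℝ := 2*((k:ℝ)+1)*T with hd
    have hk0 : (0:ℝ) ≤ (k:ℝ) := Nat.cast_nonneg k
    have ha0 : 0 ≤ a := by positivity
    have hab : a ≤ b := by rw [ha, hb]; nlinarith
    have hbd : b ≤ d := by rw [hb, hd]; nlinarith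
    have hb0 : 0 ≤ b := le_trans ha0 hab
    have hba : b - a = T := by rw [ha, hb]; ring
    have hdb : d - b = T := by rw [hb, hd]; ring
    have h1 := bfn_key γ (-(4*Γ)) a b hγ hab Z V
      (hZ.mono (hIccsub a b ha0)) (hV.mono (hIccsub a b ha0))
      (by intro t ht
          have := hVf k t ht
          convert this using 1
          ring)
    have h2 := bfn_key γ (4*Γ) b d hγ hbd Z V
      (hZ.mono (hIccsub b d hb0)) (hV.mono (hIccsub b d hb0))
      (fun t ht => hVb k t ht)
    have hmax1 : max (-(4*Γ)) 0 = 0 := max_eq_right (by linarith)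
    have hmax2 : max (4*Γ) 0 = 4*Γ := max_eq_left (by linarith)
    rw [hmax1, hba] at h1
    rw [hmax2, hdb] at h2
    simp only [zero_mul, Real.exp_zero, one_mul, zero_sub, neg_neg, sub_self] at h1 h2
    -- h1 : 2γ∫a..b ≤ V a - exp(4Γ*T) * V b
    -- h2 : 2γ∫b..d ≤ exp(4Γ*T) * V b - V d
    have hi1 : IntervalIntegrable (fun t => (Z t)^2) volume a b := by
      apply ContinuousOn.intervalIntegrable
      rw [uIcc_of_le hab]; exact (hZ.mono (hIccsub a b ha0)).pow 2
    have hi2 : IntervalIntegrable (fun t => (Z t)^2) volume b d := by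
      apply ContinuousOn.intervalIntegrable
      rw [uIcc_of_le hbd]; exact (hZ.mono (hIccsub b d hb0)).pow 2
    have hadd := intervalIntegral.integral_add_adjacent_intervals hi1 hi2
    rw [← hadd]
    linarith
  -- bound on [0, 2nT] by induction
  have hbound : ∀ n : ℕ,
      2*γ * ∫ t in (0:ℝ)..(2*(n:ℝ)*T), (Z t)^2 ≤ V 0 - V (2*(n:ℝ)*T) := by
    intro n
    induction n with
    | zero => simp
    | succ n ih =>
      have hk0 : (0:ℝ) ≤ (n:ℝ) := Nat.cast_nonneg n
      have ha0 : (0:ℝ) ≤ 2*(n:ℝ)*T := by positivity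
      have hi1 : IntervalIntegrable (fun t => (Z t)^2) volume 0 (2*(n:ℝ)*T) := by
        apply ContinuousOn.intervalIntegrable
        rw [uIcc_of_le ha0]; exact (hZ.mono (hIccsub _ _ le_rfl)).pow 2
      have hi2 : IntervalIntegrable (fun t => (Z t)^2) volume (2*(n:ℝ)*T)
          (2*((n:ℝ)+1)*T) := by
        apply ContinuousOn.intervalIntegrable
        rw [uIcc_of_le (by nlinarith)]
        exact (hZ.mono (hIccsub _ _ ha0)).pow 2
      have hadd := intervalIntegral.integral_add_adjacent_intervals hi1 hi2
      have hcast : (2*((n:ℕ)+1:ℕ):ℝ) = 2*((n:ℝ)+1) := by push_cast; ring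
      have hper := hperiod n
      push_cast
      rw [← hadd]
      push_cast at ih
      linarith
  have hbound' : ∀ n : ℕ,
      ∫ t in (0:ℝ)..(2*(n:ℝ)*T), (Z t)^2 ≤ V 0 / (2*γ) := by
    intro n
    have hVn : 0 ≤ V (2*(n:ℝ)*T) := hVnonneg _ (by
      simp only [mem_Ici]; positivity)
    rw [le_div_iff₀ (by positivity : (0:ℝ) < 2*γ)]
    nlinarith [hbound n]
  -- integrability on Ioi 0
  have htend : Tendsto (fun n : ℕ => 2*(n:ℝ)*T) atTop atTop := by
    apply Filter.Tendsto.atTop_mul_const hT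
    exact (tendsto_natCast_atTop_atTop).const_mul_atTop (by norm_num : (0:ℝ) < 2)
  have hIoc : ∀ n : ℕ, IntegrableOn (fun t => (Z t)^2) (Ioc 0 (2*(n:ℝ)*T)) := by
    intro n
    have hk0 : (0:ℝ) ≤ (n:ℝ) := Nat.cast_nonneg n
    have ha0 : (0:ℝ) ≤ 2*(n:ℝ)*T := by positivity
    have : IntegrableOn (fun t => (Z t)^2) (Icc 0 (2*(n:ℝ)*T)) :=
      ContinuousOn.integrableOn_Icc ((hZ.mono (hIccsub _ _ le_rfl)).pow 2)
    exact this.mono_set Ioc_subset_Icc_self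
  have hnorm : ∀ n : ℕ, ∫ t in (0:ℝ)..(2*(n:ℝ)*T), ‖(Z t)^2‖ ≤ V 0 / (2*γ) := by
    intro n
    have : (fun t => ‖(Z t)^2‖) = fun t => (Z t)^2 := by
      funext t; rw [Real.norm_eq_abs, abs_of_nonneg (hZsq t)]
    rw [this]; exact hbound' n
  have hIoi : IntegrableOn (fun t => (Z t)^2) (Ioi 0) :=
    integrableOn_Ioi_of_intervalIntegral_norm_bounded (V 0 / (2*γ)) 0 hIoc htend
      (Eventually.of_forall hnorm)
  have hIci : IntegrableOn (fun t => (Z t)^2) (Ici 0) :=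
    Iff.mpr integrableOn_Ici_iff_integrableOn_Ioi hIoi
  refine ⟨hIci, ?_⟩
  rw [MeasureTheory.integral_Ici_eq_integral_Ioi]
  have htendI := MeasureTheory.intervalIntegral_tendsto_integral_Ioi 0 hIoi htend
  exact le_of_tendsto htendI (Eventually.of_forall hbound')
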